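/- (Convergence to stationarity, almost-sure form.) Let (Ω, 𝒜, P) be a probability space with a filtration (ℱ_t)_{t∈ℕ}. Let L : ℝ^d → ℝ be continuously differentiable, bounded below, with β-Lipschitz gradient for some β > 0. Let (φ_t) be random vectors in ℝ^d with φ_t ℱ_t-measurable, and (g_t) random vectors with g_t ℱ_{t+1}-measurable, satisfying the recursion φ_{t+1} = φ_t − η_t g_t for deterministic step sizes η_t with 0 < η_t ≤ 1/β, η_t → 0, Σ_t η_t = ∞, and Σ_t η_t² < ∞. Assume, for all t: E[g_t | ℱ_t] = ∇L(φ_t) almost surely; E[‖g_t − ∇L(φ_t)‖² | ℱ_t] ≤ v almost surely for a constant v ≥ 0; and ‖g_t‖ ≤ G almost surely for a constant G ≥ 0. Then P( lim_{t→∞} ‖∇L(φ_t)‖ = 0 ) = 1. -/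

import Mathlib

open MeasureTheory Filter


set_option maxHeartbeats 2000000

open Finset
open scoped ENNReal NNReal

section Aux

lemma summable_of_tsum_ofReal_ne_top {f : ℕ → ℝ} (hf : ∀ t, 0 ≤ f t)
    (h : (∑' t, ENNReal.ofReal (f t)) ≠ ⊤) : Summable f := by
  have h2 : Summable (fun t => Real.toNNReal (f t)) :=
    ENNReal.tsum_coe_ne_top_iff_summable.mp (by simpa [ENNReal.ofReal] using h)
  exact (NNReal.summable_coe.mpr h2).congr fun t => Real.coe_toNNReal _ (hf t)

lemma eucl_abs_coord_le_norm {d : ℕ} (x : EuclideanSpace ℝ (Fin d)) (i : Fin d) :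
    |x i| ≤ ‖x‖ := by
  rw [EuclideanSpace.norm_eq]
  calc |x i| = Real.sqrt (‖x i‖ ^ 2) := by
        rw [Real.sqrt_sq_eq_abs, Real.norm_eq_abs, abs_abs]
    _ ≤ _ := Real.sqrt_le_sqrt
        (Finset.single_le_sum (fun j _ => sq_nonneg ‖x j‖) (Finset.mem_univ i))

lemma eucl_inner_eq_sum {d : ℕ} (x y : EuclideanSpace ℝ (Fin d)) :
    (inner ℝ x y : ℝ) = ∑ i, x i * y i := by
  simp [PiLp.inner_apply, RCLike.inner_apply, mul_comm]

lemma det_tendsto_zero (a η : ℕ → ℝ) (K : ℝ) (hK : 0 ≤ K)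
    (ha : ∀ t, 0 ≤ a t)
    (hstep : ∀ t, |a (t + 1) - a t| ≤ K * η t)
    (hη0 : ∀ t, 0 < η t)
    (hηlim : Tendsto η atTop (nhds 0))
    (hdiv : Tendsto (fun n => ∑ t ∈ Finset.range n, η t) atTop atTop)
    (hsum : Summable (fun t => η t * a t ^ 2)) :
    Tendsto a atTop (nhds 0) := by
  have hη_not_summable : ¬ Summable η := by
    intro hs
    exact not_tendsto_atTop_of_tendsto_nhds hs.hasSum.tendsto_sum_nat hdiv
  rw [Metric.tendsto_atTop]
  intro ε hε
  by_contra hcon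
  push_neg at hcon
  have hfreq_big : ∀ N, ∃ t ≥ N, ε ≤ a t := by
    intro N
    obtain ⟨t, ht, h⟩ := hcon N
    refine ⟨t, ht, ?_⟩
    rw [Real.dist_eq, sub_zero, abs_of_nonneg (ha t)] at h
    linarith
  have hfreq_small : ∀ N, ∃ t ≥ N, a t ≤ ε / 2 := by
    intro N
    by_contra hsmall
    push_neg at hsmall
    apply hη_not_summable
    have hcomp : Summable (fun t => η (t + N)) := by
      refine Summable.of_nonneg_of_le (fun t => (hη0 _).le)
        (f := fun t => (4 / ε ^ 2) * (η (t + N) * a (t + N) ^ 2)) (fun t => ?_) ?_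
      · have h1 : ε / 2 < a (t + N) := hsmall (t + N) (Nat.le_add_left _ _)
        have h2 : (ε / 2) ^ 2 ≤ a (t + N) ^ 2 := by nlinarith
        have h3 := (hη0 (t + N)).le
        have h4 := mul_le_mul_of_nonneg_left h2 h3
        show η (t + N) ≤ (4 / ε ^ 2) * (η (t + N) * a (t + N) ^ 2)
        rw [div_mul_eq_mul_div, le_div_iff₀ (by positivity)]
        nlinarith
      · exact ((hsum.comp_injective (add_left_injective N)).mul_left _)
    exact (summable_nat_add_iff N).mp hcomp
  rcases eq_or_lt_of_le hK with hK0 | hKpos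
  · have hconst : ∀ t, a t = a 0 := by
      intro t
      induction t with
      | zero => rfl
      | succ n ih =>
        have h := hstep n
        rw [← hK0, zero_mul, abs_nonpos_iff, sub_eq_zero] at h
        rw [h, ih]
    obtain ⟨t₁, _, h1⟩ := hfreq_big 0
    obtain ⟨t₂, _, h2⟩ := hfreq_small 0
    rw [hconst t₁] at h1; rw [hconst t₂] at h2
    linarith
  set P : ℕ → ℝ := fun n => ∑ t ∈ Finset.range n, η t * a t ^ 2 with hPdef
  set C := ∑' t, η t * a t ^ 2 with hC
  have hP_mono : Monotone P := by
    apply monotone_nat_of_le_succ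
    intro n
    simp only [hPdef, Finset.sum_range_succ]
    nlinarith [hη0 n, ha n, sq_nonneg (a n)]
  have hP_le : ∀ n, P n ≤ C := fun n =>
    Summable.sum_le_tsum _ (fun t _ => mul_nonneg (hη0 t).le (sq_nonneg _)) hsum
  set δ := ε ^ 3 / (32 * K) with hδ
  have hδpos : 0 < δ := by positivity
  obtain ⟨T₁, hT₁⟩ := (hsum.hasSum.tendsto_sum_nat.eventually
    (eventually_gt_nhds (show C - δ < C by linarith))).exists_forall_of_atTop
  obtain ⟨T₂, hT₂⟩ := (hηlim.eventually
    (eventually_lt_nhds (show (0:ℝ) < ε / (4 * K) by positivity))).exists_forall_of_atTop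
  set T := max T₁ T₂ with hT
  obtain ⟨s, hsT, hs⟩ := hfreq_small T
  obtain ⟨u, hus, hu⟩ := hfreq_big (s + 1)
  have hsu : s < u := lt_of_lt_of_le (Nat.lt_succ_self s) hus
  set S := (Finset.Ico s u).filter (fun t => a t ≤ ε / 2) with hS
  have hSne : S.Nonempty := ⟨s, by simp [hS, Finset.mem_Ico, hsu, hs]⟩
  set m := S.max' hSne with hm
  have hmS : m ∈ S := S.max'_mem hSne
  simp only [hS, Finset.mem_filter, Finset.mem_Ico] at hmS
  obtain ⟨⟨hsm, hmu⟩, ham⟩ := hmS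
  have hmax : ∀ t, m < t → t < u → ε / 2 < a t := by
    intro t hmt htu
    by_contra hle
    push_neg at hle
    have : t ∈ S := by
      simp only [hS, Finset.mem_filter, Finset.mem_Ico]
      exact ⟨⟨le_trans hsm hmt.le, htu⟩, hle⟩
    exact absurd (S.le_max' t this) (not_le.mpr hmt)
  -- telescoping
  have htel : a u - a m = ∑ t ∈ Finset.Ico m u, (a (t + 1) - a t) := by
    rw [Finset.sum_Ico_eq_sub _ hmu.le, Finset.sum_range_sub, Finset.sum_range_sub]
    ring
  have hclaim1 : ε / 2 ≤ K * ∑ t ∈ Finset.Ico m u, η t := by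
    have h1 : a u - a m ≤ ∑ t ∈ Finset.Ico m u, K * η t := by
      rw [htel]
      exact Finset.sum_le_sum fun t _ => (le_abs_self _).trans (hstep t)
    rw [← Finset.mul_sum] at h1
    linarith
  have hηm : η m < ε / (4 * K) := hT₂ m (le_trans (le_trans (le_max_right _ _) hsT) hsm)
  have hsplit : ∑ t ∈ Finset.Ico m u, η t
      = η m + ∑ t ∈ Finset.Ico (m + 1) u, η t := by
    rw [Finset.sum_eq_sum_Ico_succ_bot hmu]
  have hclaim2 : ε / (4 * K) ≤ ∑ t ∈ Finset.Ico (m + 1) u, η t := by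
    have h2 : ε / (2 * K) ≤ ∑ t ∈ Finset.Ico m u, η t := by
      rw [div_le_iff₀ (by positivity)] at hclaim1 ⊢
      linarith [hclaim1]
    rw [hsplit] at h2
    have : ε / (2 * K) - ε / (4 * K) = ε / (4 * K) := by field_simp; ring
    linarith
  have hclaim3 : 2 * δ ≤ ∑ t ∈ Finset.Ico (m + 1) u, η t * a t ^ 2 := by
    have h3 : ∀ t ∈ Finset.Ico (m + 1) u, η t * (ε / 2) ^ 2 ≤ η t * a t ^ 2 := by
      intro t ht
      rw [Finset.mem_Ico] at ht
      have h1 := hmax t ht.1 ht.2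
      have h2 : (ε / 2) ^ 2 ≤ a t ^ 2 := by nlinarith
      exact mul_le_mul_of_nonneg_left h2 (hη0 t).le
    calc 2 * δ = (ε / 2) ^ 2 * (ε / (4 * K)) := by
          rw [hδ]; field_simp; ring
      _ ≤ (ε / 2) ^ 2 * ∑ t ∈ Finset.Ico (m + 1) u, η t :=
          mul_le_mul_of_nonneg_left hclaim2 (by positivity)
      _ = ∑ t ∈ Finset.Ico (m + 1) u, η t * (ε / 2) ^ 2 := by
          rw [Finset.mul_sum]; exact Finset.sum_congr rfl fun t _ => mul_comm _ _
      _ ≤ _ := Finset.sum_le_sum h3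
  have hclaim4 : ∑ t ∈ Finset.Ico (m + 1) u, η t * a t ^ 2 < δ := by
    have heq : ∑ t ∈ Finset.Ico (m + 1) u, η t * a t ^ 2 = P u - P (m + 1) := by
      rw [Finset.sum_Ico_eq_sub _ (by omega)]
    have h5 : P T₁ ≤ P (m + 1) := hP_mono (by omega)
    have h6 := hT₁ T₁ le_rfl
    have h7 := hP_le u
    rw [heq]
    simp only [hPdef] at *
    linarith
  linarith


lemma descent_lemma {d : ℕ} (L : EuclideanSpace ℝ (Fin d) → ℝ) (hLdiff : ContDiff ℝ 1 L)
    (β : ℝ) (hβ : 0 ≤ β)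
    (hLip : ∀ x y, ‖gradient L x - gradient L y‖ ≤ β * ‖x - y‖) (x y : EuclideanSpace ℝ (Fin d)) :
    L y ≤ L x + inner ℝ (gradient L x) (y - x) + β * ‖y - x‖ ^ 2 := by
  have hdiff : ∀ z, HasFDerivAt L (fderiv ℝ L z) z :=
    fun z => (hLdiff.differentiable one_ne_zero z).hasFDerivAt
  have key : ‖L y - L x - (fderiv ℝ L x) (y - x)‖ ≤ β * ‖y - x‖ * ‖y - x‖ := by
    apply Convex.norm_image_sub_le_of_norm_hasFDerivWithin_le'
      (fun z _ => (hdiff z).hasFDerivWithinAt) ?_ (convex_segment x y)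
      (left_mem_segment ℝ x y) (right_mem_segment ℝ x y)
    intro z hz
    obtain ⟨u, v, hu, hv, huv, rfl⟩ := hz
    have h1 : ‖fderiv ℝ L (u • x + v • y) - fderiv ℝ L x‖
        = ‖gradient L (u • x + v • y) - gradient L x‖ := by
      have : fderiv ℝ L (u • x + v • y) - fderiv ℝ L x
          = InnerProductSpace.toDual ℝ _ (gradient L (u • x + v • y) - gradient L x) := by
        simp [gradient, map_sub]
      rw [this, (InnerProductSpace.toDual ℝ _).norm_map]
    rw [h1]
    calc ‖gradient L (u • x + v • y) - gradient L x‖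
        ≤ β * ‖(u • x + v • y) - x‖ := hLip _ _
      _ ≤ β * ‖y - x‖ := by
          apply mul_le_mul_of_nonneg_left _ hβ
          have hu1 : u = 1 - v := by linarith
          subst hu1
          have : ((1 - v) • x + v • y) - x = v • (y - x) := by module
          rw [this, norm_smul, Real.norm_eq_abs, abs_of_nonneg hv]
          nlinarith [norm_nonneg (y - x)]
  have h2 : (fderiv ℝ L x) (y - x) = inner ℝ (gradient L x) (y - x) := by
    simp [gradient]
  rw [Real.norm_eq_abs] at key
  have h3 := (abs_le.mp key).2
  rw [h2] at h3
  rw [pow_two]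
  linarith


lemma condexp_clm_comm {α : Type*} {m m0 : MeasurableSpace α} {μ : Measure α}
    (hm : m ≤ m0) [SigmaFinite (μ.trim hm)]
    {E F : Type*} [NormedAddCommGroup E] [NormedSpace ℝ E] [CompleteSpace E]
    [NormedAddCommGroup F] [NormedSpace ℝ F] [CompleteSpace F]
    (T : E →L[ℝ] F) {f : α → E} (hf : Integrable f μ) :
    (μ[fun ω => T (f ω)|m]) =ᵐ[μ] fun ω => T ((μ[f|m]) ω) := by
  refine (ae_eq_condExp_of_forall_setIntegral_eq hm (T.integrable_comp hf)
    (fun s _ _ => (T.integrable_comp integrable_condExp).integrableOn)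
    (fun s hs hμs => ?_) ?_).symm
  · calc ∫ x in s, T ((μ[f|m]) x) ∂μ = T (∫ x in s, (μ[f|m]) x ∂μ) :=
          ContinuousLinearMap.integral_comp_comm T
            ((integrable_condExp (f := f) (m := m)).integrableOn)
      _ = T (∫ x in s, f x ∂μ) := by rw [setIntegral_condExp hm hf hs]
      _ = ∫ x in s, T (f x) ∂μ :=
          (ContinuousLinearMap.integral_comp_comm T hf.integrableOn).symm
  · exact ⟨fun ω => T ((μ[f|m]) ω),
      T.continuous.comp_stronglyMeasurable stronglyMeasurable_condExp, EventuallyEq.rfl⟩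


end Aux

/-- **Convergence to stationarity, almost-sure form.** For the stochastic gradient
recursion `φ (t+1) = φ t - η t • g t` with `L` continuously differentiable, bounded
below, with `β`-Lipschitz gradient, diminishing step sizes `0 < η t ≤ 1/β`, `η t → 0`,
`∑ η t = ∞`, `∑ (η t)² < ∞`, conditionally unbiased estimators `E[g t | ℱ t] = ∇L(φ t)`
with conditional variance bound `v` and a.s. norm bound `G`, the gradients vanish
almost surely: `P(lim_t ‖∇L(φ t)‖ = 0) = 1`. -/
theorem convergence_to_stationarity_almost_sure {d : ℕ}
    {Ω : Type*} {𝒜 : MeasurableSpace Ω} (μ : Measure Ω) [IsProbabilityMeasure μ]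
    (ℱ : Filtration ℕ 𝒜)
    (L : EuclideanSpace ℝ (Fin d) → ℝ) (hLdiff : ContDiff ℝ 1 L)
    (hLbdd : BddBelow (Set.range L))
    (β : ℝ) (hβ : 0 < β)
    (hLip : ∀ x y, ‖gradient L x - gradient L y‖ ≤ β * ‖x - y‖)
    (φ g : ℕ → Ω → EuclideanSpace ℝ (Fin d))
    (hφmeas : ∀ t, Measurable[ℱ t] (φ t))
    (hgmeas : ∀ t, Measurable[ℱ (t + 1)] (g t))
    (η : ℕ → ℝ) (hη0 : ∀ t, 0 < η t) (hηβ : ∀ t, η t ≤ 1 / β)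
    (hηlim : Tendsto η atTop (nhds 0))
    (hηdiv : Tendsto (fun n => ∑ t ∈ Finset.range n, η t) atTop atTop)
    (hη2 : Summable fun t => (η t) ^ 2)
    (hrec : ∀ t ω, φ (t + 1) ω = φ t ω - η t • g t ω)
    (v : ℝ) (hv : 0 ≤ v)
    (hunb : ∀ t, μ[g t | ℱ t] =ᵐ[μ] fun ω => gradient L (φ t ω))
    (hvar : ∀ t, ∀ᵐ ω ∂μ,
      (μ[fun ω' => ‖g t ω' - gradient L (φ t ω')‖ ^ 2 | ℱ t]) ω ≤ v)
    (G : ℝ) (hG : 0 ≤ G) (hGbd : ∀ t, ∀ᵐ ω ∂μ, ‖g t ω‖ ≤ G) :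
    ∀ᵐ ω ∂μ, Tendsto (fun t => ‖gradient L (φ t ω)‖) atTop (nhds 0) := by
  classical
  -- basic measurability / continuity
  have hgc : Continuous (gradient L) := by
    have : LipschitzWith β.toNNReal (gradient L) := by
      apply LipschitzWith.of_dist_le_mul
      intro x y
      rw [dist_eq_norm, dist_eq_norm, Real.coe_toNNReal _ hβ.le]
      exact hLip x y
    exact this.continuous
  have hφm : ∀ t, Measurable (φ t) := fun t => (hφmeas t).mono (ℱ.le t) le_rfl
  have hgm : ∀ t, Measurable (g t) := fun t => (hgmeas t).mono (ℱ.le (t + 1)) le_rfl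
  have hG_ae : ∀ᵐ ω ∂μ, ∀ t, ‖g t ω‖ ≤ G := ae_all_iff.mpr hGbd
  have hgint : ∀ t, Integrable (g t) μ := fun t =>
    Integrable.mono' (integrable_const G) (hgm t).aestronglyMeasurable (hGbd t)
  set c := sInf (Set.range L) with hc_def
  have hc : ∀ x, c ≤ L x := fun x => csInf_le hLbdd ⟨x, rfl⟩
  set A : ℕ → Set Ω := fun N => {ω | ‖φ 0 ω‖ ≤ (N : ℝ)} with hA_def
  have hA0 : ∀ N, MeasurableSet[ℱ 0] (A N) := by
    intro N
    have h1 := @Measurable.norm (EuclideanSpace ℝ (Fin d)) Ω _ _ _ (ℱ 0) _ (hφmeas 0)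
    exact h1 measurableSet_Iic
  have hAmeas : ∀ N, MeasurableSet (A N) := fun N => ℱ.le 0 _ (hA0 N)
  -- pointwise descent inequality
  have hdesc : ∀ t ω, L (φ (t + 1) ω) ≤ L (φ t ω)
      - η t * (inner ℝ (gradient L (φ t ω)) (g t ω) : ℝ)
      + β * (η t ^ 2 * ‖g t ω‖ ^ 2) := by
    intro t ω
    have h := descent_lemma L hLdiff β hβ.le hLip (φ t ω) (φ (t + 1) ω)
    have hy : φ (t + 1) ω - φ t ω = (-(η t)) • g t ω := by
      rw [hrec t ω, neg_smul]; abel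
    rw [hy, real_inner_smul_right, norm_smul, Real.norm_eq_abs, abs_neg,
      abs_of_pos (hη0 t), mul_pow] at h
    linarith
  -- a.e. step bound on gradient norms
  have hstep_ae : ∀ᵐ ω ∂μ, ∀ t,
      |‖gradient L (φ (t + 1) ω)‖ - ‖gradient L (φ t ω)‖| ≤ (β * G) * η t := by
    filter_upwards [hG_ae] with ω hg t
    have h1 : |‖gradient L (φ (t + 1) ω)‖ - ‖gradient L (φ t ω)‖|
        ≤ ‖gradient L (φ (t + 1) ω) - gradient L (φ t ω)‖ := abs_norm_sub_norm_le _ _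
    have h2 := hLip (φ (t + 1) ω) (φ t ω)
    have hy : φ (t + 1) ω - φ t ω = (-(η t)) • g t ω := by
      rw [hrec t ω, neg_smul]; abel
    rw [hy, norm_smul, Real.norm_eq_abs, abs_neg, abs_of_pos (hη0 t)] at h2
    have h3 : η t * ‖g t ω‖ ≤ η t * G :=
      mul_le_mul_of_nonneg_left (hg t) (hη0 t).le
    calc |‖gradient L (φ (t + 1) ω)‖ - ‖gradient L (φ t ω)‖|
        ≤ β * (η t * ‖g t ω‖) := h1.trans h2
      _ ≤ β * (η t * G) := mul_le_mul_of_nonneg_left h3 hβ.le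
      _ = (β * G) * η t := by ring
  -- the key summability statement, localized
  have key : ∀ N : ℕ, ∀ᵐ ω ∂(μ.restrict (A N)),
      Summable (fun t => η t * ‖gradient L (φ t ω)‖ ^ 2) := by
    intro N
    set ν := μ.restrict (A N) with hν_def
    have hν_le : ∀ s : Set Ω, ν s ≤ μ s := fun s => Measure.restrict_le_self s
    haveI : IsFiniteMeasure ν := by
      constructor
      exact lt_of_le_of_lt (hν_le Set.univ) (measure_lt_top μ _)
    -- radius bounds
    set R : ℕ → ℝ := fun t => N + (∑ s ∈ Finset.range t, η s) * G with hR_def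
    have hR0 : ∀ t, 0 ≤ R t := by
      intro t
      have h1 : 0 ≤ ∑ s ∈ Finset.range t, η s :=
        Finset.sum_nonneg fun s _ => (hη0 s).le
      have h2 := mul_nonneg h1 hG
      simp only [hR_def]
      have h3 : (0:ℝ) ≤ N := Nat.cast_nonneg N
      linarith
    have hφbd : ∀ᵐ ω ∂ν, ∀ t, ‖φ t ω‖ ≤ R t := by
      filter_upwards [ae_restrict_mem (hAmeas N), ae_restrict_of_ae hG_ae] with ω hω hg
      intro t
      induction t with
      | zero => simpa [hR_def, hA_def] using hω
      | succ n ih =>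
        have : ‖φ (n + 1) ω‖ ≤ ‖φ n ω‖ + η n * ‖g n ω‖ := by
          rw [hrec n ω]
          calc ‖φ n ω - η n • g n ω‖ ≤ ‖φ n ω‖ + ‖η n • g n ω‖ := norm_sub_le _ _
            _ = ‖φ n ω‖ + η n * ‖g n ω‖ := by
                rw [norm_smul, Real.norm_eq_abs, abs_of_pos (hη0 n)]
        have h2 : η n * ‖g n ω‖ ≤ η n * G := mul_le_mul_of_nonneg_left (hg n) (hη0 n).le
        have h3 : R (n + 1) = R n + η n * G := by
          simp only [hR_def, Finset.sum_range_succ]; ring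
        linarith
    -- gradient bound
    have hgb : ∀ (x : EuclideanSpace ℝ (Fin d)) (r : ℝ), ‖x‖ ≤ r →
        ‖gradient L x‖ ≤ ‖gradient L 0‖ + β * r := by
      intro x r hx
      have h1 := hLip x 0
      rw [sub_zero] at h1
      have h2 := norm_sub_norm_le (gradient L x) (gradient L 0)
      have h3 : β * ‖x‖ ≤ β * r := mul_le_mul_of_nonneg_left hx hβ.le
      linarith
    set D : ℕ → ℝ := fun t => ‖gradient L 0‖ + β * R t with hD_def
    have hD0 : ∀ t, 0 ≤ D t := fun t => by
      have h1 := mul_nonneg hβ.le (hR0 t)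
      simp only [hD_def]
      have h2 := norm_nonneg (gradient L (0 : EuclideanSpace ℝ (Fin d)))
      linarith
    have hab : ∀ᵐ ω ∂ν, ∀ t, ‖gradient L (φ t ω)‖ ≤ D t := by
      filter_upwards [hφbd] with ω hω t
      exact hgb _ _ (hω t)
    -- bound for L on balls
    have hLbd : ∀ t : ℕ, ∃ M : ℝ, ∀ x : EuclideanSpace ℝ (Fin d), ‖x‖ ≤ R t → |L x| ≤ M := by
      intro t
      obtain ⟨M, hM⟩ := (isCompact_closedBall (0 : EuclideanSpace ℝ (Fin d)) (R t)).exists_bound_of_continuousOn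
        hLdiff.continuous.continuousOn
      exact ⟨M, fun x hx => by
        have := hM x (by simpa [Metric.mem_closedBall, dist_zero_right] using hx)
        rwa [Real.norm_eq_abs] at this⟩
    choose ML hML using hLbd
    -- integrability statements
    have hmeasL : ∀ t, Measurable (fun ω => L (φ t ω)) :=
      fun t => hLdiff.continuous.measurable.comp (hφm t)
    have hmeasa2 : ∀ t, Measurable (fun ω => ‖gradient L (φ t ω)‖ ^ 2) := fun t =>
      ((hgc.measurable.comp (hφm t)).norm).pow_const 2
    have hLint : ∀ t, Integrable (fun ω => L (φ t ω)) ν := by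
      intro t
      refine Integrable.mono' (integrable_const (ML t)) (hmeasL t).aestronglyMeasurable ?_
      filter_upwards [hφbd] with ω hω
      rw [Real.norm_eq_abs]
      exact hML t _ (hω t)
    have ha2int : ∀ t, Integrable (fun ω => ‖gradient L (φ t ω)‖ ^ 2) ν := by
      intro t
      refine Integrable.mono' (integrable_const ((D t) ^ 2)) (hmeasa2 t).aestronglyMeasurable ?_
      filter_upwards [hab] with ω hω
      rw [Real.norm_eq_abs, abs_of_nonneg (sq_nonneg _)]
      have := hω t
      nlinarith [norm_nonneg (gradient L (φ t ω))]
    have hg2int : ∀ t, Integrable (fun ω => ‖g t ω‖ ^ 2) ν := by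
      intro t
      refine Integrable.mono' (integrable_const (G ^ 2)) ((hgm t).norm.pow_const 2).aestronglyMeasurable ?_
      filter_upwards [ae_restrict_of_ae (hGbd t)] with ω hω
      rw [Real.norm_eq_abs, abs_of_nonneg (sq_nonneg _)]
      nlinarith [norm_nonneg (g t ω)]
    have hinner_meas : ∀ t, Measurable (fun ω => (inner ℝ (gradient L (φ t ω)) (g t ω) : ℝ)) :=
      fun t => (hgc.measurable.comp (hφm t)).inner (hgm t)
    have hinnerint : ∀ t, Integrable (fun ω => (inner ℝ (gradient L (φ t ω)) (g t ω) : ℝ)) ν := by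
      intro t
      refine Integrable.mono' (integrable_const (D t * G)) (hinner_meas t).aestronglyMeasurable ?_
      filter_upwards [hab, ae_restrict_of_ae (hGbd t)] with ω h1 h2
      calc ‖(inner ℝ (gradient L (φ t ω)) (g t ω) : ℝ)‖
          ≤ ‖gradient L (φ t ω)‖ * ‖g t ω‖ := norm_inner_le_norm _ _
        _ ≤ D t * G := by
            apply mul_le_mul (h1 t) h2 (norm_nonneg _) (hD0 t)
    -- the conditional expectation identity
    have hid : ∀ t, ∫ ω, (inner ℝ (gradient L (φ t ω)) (g t ω) : ℝ) ∂ν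
        = ∫ ω, ‖gradient L (φ t ω)‖ ^ 2 ∂ν := by
      intro t
      have hAt : MeasurableSet[ℱ t] (A N) := ℱ.mono (Nat.zero_le t) _ (hA0 N)
      have hXmt : Measurable[ℱ t] (fun ω => gradient L (φ t ω)) :=
        fun s hs => hφmeas t (hgc.measurable hs)
      have hXsm : ∀ i : Fin d, StronglyMeasurable[ℱ t] (fun ω => gradient L (φ t ω) i) := by
        intro i
        have h1 : Measurable[ℱ t] (fun ω => gradient L (φ t ω) i) :=
          fun s hs => hXmt ((EuclideanSpace.proj (𝕜 := ℝ) i).continuous.measurable hs)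
        exact h1.stronglyMeasurable
      have hXim : ∀ i : Fin d, Measurable (fun ω => gradient L (φ t ω) i) :=
        fun i s hs => (hgc.measurable.comp (hφm t))
          ((EuclideanSpace.proj (𝕜 := ℝ) i).continuous.measurable hs)
      have hgim : ∀ i : Fin d, Measurable (fun ω => g t ω i) :=
        fun i s hs => (hgm t) ((EuclideanSpace.proj (𝕜 := ℝ) i).continuous.measurable hs)
      have hgi_int : ∀ i : Fin d, Integrable (fun ω => g t ω i) μ := by
        intro i
        refine Integrable.mono' (integrable_const G) (hgim i).aestronglyMeasurable ?_
        filter_upwards [hGbd t] with ω h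
        rw [Real.norm_eq_abs]
        exact (eucl_abs_coord_le_norm _ i).trans h
      have hXgi_int : ∀ i : Fin d,
          Integrable (fun ω => gradient L (φ t ω) i * g t ω i) ν := by
        intro i
        refine Integrable.mono' (integrable_const (D t * G))
          ((hXim i).mul (hgim i)).aestronglyMeasurable ?_
        filter_upwards [hab, ae_restrict_of_ae (hGbd t)] with ω h1 h2
        rw [Real.norm_eq_abs, abs_mul]
        apply mul_le_mul ((eucl_abs_coord_le_norm _ i).trans (h1 t))
          ((eucl_abs_coord_le_norm _ i).trans h2) (abs_nonneg _) (hD0 t)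
      have hXXi_int : ∀ i : Fin d,
          Integrable (fun ω => gradient L (φ t ω) i * gradient L (φ t ω) i) ν := by
        intro i
        refine Integrable.mono' (integrable_const (D t * D t))
          ((hXim i).mul (hXim i)).aestronglyMeasurable ?_
        filter_upwards [hab] with ω h1
        rw [Real.norm_eq_abs, abs_mul]
        apply mul_le_mul ((eucl_abs_coord_le_norm _ i).trans (h1 t))
          ((eucl_abs_coord_le_norm _ i).trans (h1 t)) (abs_nonneg _) (hD0 t)
      have hcond : ∀ i : Fin d,
          (ν[fun ω => g t ω i | ℱ t]) =ᵐ[ν] fun ω => gradient L (φ t ω) i := by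
        intro i
        have e1 : (ν[fun ω => g t ω i | ℱ t]) =ᵐ[ν] (μ[fun ω => g t ω i | ℱ t]) :=
          condExp_restrict_ae_eq_restrict (ℱ.le t) hAt (hgi_int i)
        have e2 : (μ[fun ω => g t ω i | ℱ t]) =ᵐ[μ] fun ω => (μ[g t | ℱ t]) ω i :=
          condexp_clm_comm (ℱ.le t) (EuclideanSpace.proj (𝕜 := ℝ) i) (hgint t)
        have e3 : (fun ω => (μ[g t | ℱ t]) ω i) =ᵐ[μ] fun ω => gradient L (φ t ω) i := by
          filter_upwards [hunb t] with ω h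
          rw [h]
        exact e1.trans (ae_restrict_of_ae (e2.trans e3))
      have hmain_i : ∀ i : Fin d, ∫ ω, gradient L (φ t ω) i * g t ω i ∂ν
          = ∫ ω, gradient L (φ t ω) i * gradient L (φ t ω) i ∂ν := by
        intro i
        have h1 : ∫ ω, gradient L (φ t ω) i * g t ω i ∂ν
            = ∫ ω, (ν[fun ω' => gradient L (φ t ω') i * g t ω' i | ℱ t]) ω ∂ν :=
          (integral_condExp (ℱ.le t)).symm
        have h2 : (ν[fun ω' => gradient L (φ t ω') i * g t ω' i | ℱ t])
            =ᵐ[ν] fun ω => gradient L (φ t ω) i * (ν[fun ω' => g t ω' i | ℱ t]) ω :=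
          condExp_mul_of_stronglyMeasurable_left (hXsm i) (hXgi_int i) ((hgi_int i).restrict)
        have h3 : (fun ω => gradient L (φ t ω) i * (ν[fun ω' => g t ω' i | ℱ t]) ω)
            =ᵐ[ν] fun ω => gradient L (φ t ω) i * gradient L (φ t ω) i := by
          filter_upwards [hcond i] with ω h
          rw [h]
        rw [h1, integral_congr_ae (h2.trans h3)]
      calc ∫ ω, (inner ℝ (gradient L (φ t ω)) (g t ω) : ℝ) ∂ν
          = ∫ ω, ∑ i, gradient L (φ t ω) i * g t ω i ∂ν :=
            integral_congr_ae (Eventually.of_forall fun ω => eucl_inner_eq_sum _ _)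
        _ = ∑ i, ∫ ω, gradient L (φ t ω) i * g t ω i ∂ν :=
            integral_finset_sum _ (fun i _ => hXgi_int i)
        _ = ∑ i, ∫ ω, gradient L (φ t ω) i * gradient L (φ t ω) i ∂ν :=
            Finset.sum_congr rfl fun i _ => hmain_i i
        _ = ∫ ω, ∑ i, gradient L (φ t ω) i * gradient L (φ t ω) i ∂ν :=
            (integral_finset_sum _ (fun i _ => hXXi_int i)).symm
        _ = ∫ ω, ‖gradient L (φ t ω)‖ ^ 2 ∂ν := by
            apply integral_congr_ae (Eventually.of_forall fun ω => ?_)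
            rw [← eucl_inner_eq_sum, real_inner_self_eq_norm_sq]
    -- single step integral inequality
    set I : ℕ → ℝ := fun t => ∫ ω, L (φ t ω) ∂ν with hI_def
    set J : ℕ → ℝ := fun t => ∫ ω, ‖gradient L (φ t ω)‖ ^ 2 ∂ν with hJ_def
    have hmass1 : (ν Set.univ).toReal ≤ 1 := by
      have h1 : ν Set.univ ≤ 1 := le_trans (hν_le _) (by simp)
      calc (ν Set.univ).toReal ≤ (1 : ℝ≥0∞).toReal :=
            ENNReal.toReal_mono (by simp) h1
        _ = 1 := by simp
    have hmass0 : 0 ≤ (ν Set.univ).toReal := ENNReal.toReal_nonneg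
    have hg2le : ∀ t, ∫ ω, ‖g t ω‖ ^ 2 ∂ν ≤ G ^ 2 := by
      intro t
      have h1 : ∫ ω, ‖g t ω‖ ^ 2 ∂ν ≤ ∫ _, G ^ 2 ∂ν := by
        apply integral_mono_ae (hg2int t) (integrable_const _)
        filter_upwards [ae_restrict_of_ae (hGbd t)] with ω hω
        nlinarith [norm_nonneg (g t ω)]
      rw [integral_const, smul_eq_mul] at h1
      rw [show ν.real Set.univ = (ν Set.univ).toReal from rfl] at h1
      nlinarith [sq_nonneg G]
    have hstep : ∀ t, I (t + 1) + η t * J t ≤ I t + β * G ^ 2 * η t ^ 2 := by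
      intro t
      have hiB : Integrable (fun ω => η t * (inner ℝ (gradient L (φ t ω)) (g t ω) : ℝ)) ν :=
        (hinnerint t).const_mul (η t)
      have hiF : Integrable (fun ω => L (φ t ω)
          - η t * (inner ℝ (gradient L (φ t ω)) (g t ω) : ℝ)) ν := (hLint t).sub hiB
      have hiC : Integrable (fun ω => β * (η t ^ 2 * ‖g t ω‖ ^ 2)) ν :=
        ((hg2int t).const_mul (η t ^ 2)).const_mul β
      have h1 : I (t + 1) ≤ ∫ ω, (L (φ t ω)
          - η t * (inner ℝ (gradient L (φ t ω)) (g t ω) : ℝ)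
          + β * (η t ^ 2 * ‖g t ω‖ ^ 2)) ∂ν := by
        apply integral_mono (hLint (t + 1)) ?_ (fun ω => hdesc t ω)
        exact hiF.add hiC
      rw [integral_add hiF hiC, integral_sub (hLint t) hiB,
        integral_const_mul, integral_const_mul, integral_const_mul, hid t] at h1
      have h2 : β * (η t ^ 2 * ∫ ω, ‖g t ω‖ ^ 2 ∂ν) ≤ β * (η t ^ 2 * G ^ 2) := by
        apply mul_le_mul_of_nonneg_left _ hβ.le
        exact mul_le_mul_of_nonneg_left (hg2le t) (sq_nonneg _)
      simp only [hI_def, hJ_def] at *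
      linarith
    have hJ0 : ∀ t, 0 ≤ J t := fun t => integral_nonneg fun ω => sq_nonneg _
    have htele : ∀ n, ∑ t ∈ Finset.range n, η t * J t
        ≤ I 0 - I n + β * G ^ 2 * ∑ t ∈ Finset.range n, η t ^ 2 := by
      intro n
      induction n with
      | zero => simp
      | succ n ih =>
        rw [Finset.sum_range_succ, Finset.sum_range_succ]
        have := hstep n
        linarith
    have hIlb : ∀ n, c * (ν Set.univ).toReal ≤ I n := by
      intro n
      have h1 : ∫ (_ : Ω), c ∂ν ≤ I n := integral_mono (integrable_const c) (hLint n)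
        (fun ω => hc _)
      rwa [integral_const, smul_eq_mul, mul_comm] at h1
    have hIlb' : ∀ n, -|c| ≤ I n := by
      intro n
      refine le_trans ?_ (hIlb n)
      rcases le_or_gt 0 c with h | h
      · nlinarith [abs_nonneg c]
      · nlinarith [neg_abs_le c, abs_nonneg c]
    set B := I 0 + |c| + β * G ^ 2 * (∑' t, η t ^ 2) with hB_def
    have hbd : ∀ n, ∑ t ∈ Finset.range n, η t * J t ≤ B := by
      intro n
      have h1 : ∑ t ∈ Finset.range n, η t ^ 2 ≤ ∑' t, η t ^ 2 :=
        Summable.sum_le_tsum _ (fun t _ => sq_nonneg _) hη2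
      have h2 := htele n
      have h3 := hIlb' n
      have h4 : β * G ^ 2 * ∑ t ∈ Finset.range n, η t ^ 2
          ≤ β * G ^ 2 * ∑' t, η t ^ 2 :=
        mul_le_mul_of_nonneg_left h1 (by positivity)
      simp only [hB_def]
      linarith
    have hsumJ : Summable (fun t => η t * J t) :=
      summable_of_sum_range_le (fun t => mul_nonneg (hη0 t).le (hJ0 t)) hbd
    -- Tonelli
    have haemeas : ∀ t, Measurable (fun ω => ENNReal.ofReal (η t * ‖gradient L (φ t ω)‖ ^ 2)) :=
      fun t => ((hmeasa2 t).const_mul (η t)).ennreal_ofReal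
    have htonelli : ∫⁻ ω, (∑' t, ENNReal.ofReal (η t * ‖gradient L (φ t ω)‖ ^ 2)) ∂ν ≠ ⊤ := by
      rw [lintegral_tsum (fun t => (haemeas t).aemeasurable)]
      have heach : ∀ t, ∫⁻ ω, ENNReal.ofReal (η t * ‖gradient L (φ t ω)‖ ^ 2) ∂ν
          = ENNReal.ofReal (η t * J t) := by
        intro t
        rw [← ofReal_integral_eq_lintegral_ofReal ((ha2int t).const_mul (η t))
          (Eventually.of_forall fun ω => mul_nonneg (hη0 t).le (sq_nonneg _))]
        rw [integral_const_mul]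
      simp_rw [heach]
      rw [← ENNReal.ofReal_tsum_of_nonneg (fun t => mul_nonneg (hη0 t).le (hJ0 t)) hsumJ]
      exact ENNReal.ofReal_ne_top
    have h_ae := ae_lt_top (Measurable.ennreal_tsum haemeas) htonelli
    filter_upwards [h_ae] with ω hω
    exact summable_of_tsum_ofReal_ne_top
      (fun t => mul_nonneg (hη0 t).le (sq_nonneg _)) hω.ne
  -- conclusion on each piece
  have hconc : ∀ N : ℕ, ∀ᵐ ω ∂(μ.restrict (A N)),
      Tendsto (fun t => ‖gradient L (φ t ω)‖) atTop (nhds 0) := by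
    intro N
    filter_upwards [key N, ae_restrict_of_ae hstep_ae] with ω h1 h2
    exact det_tendsto_zero _ η (β * G) (by positivity) (fun t => norm_nonneg _)
      h2 hη0 hηlim hηdiv h1
  -- patch the pieces together
  rw [ae_iff]
  have hnull : μ (⋃ N, {ω | ¬ Tendsto (fun t => ‖gradient L (φ t ω)‖) atTop (nhds 0)} ∩ A N)
      = 0 := by
    apply measure_iUnion_null
    intro N
    have h := hconc N
    rw [ae_iff] at h
    rwa [Measure.restrict_apply' (hAmeas N)] at h
  refine measure_mono_null ?_ hnull
  intro ω hω
  obtain ⟨N, hN⟩ := exists_nat_ge ‖φ 0 ω‖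
  exact Set.mem_iUnion.mpr ⟨N, hω, hN⟩
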